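/- There does not exist a P tensor of odd order: if A ∈ T_{m,n} with m odd, then there exists a nonzero x ∈ ℝⁿ such that x_i (A x^{m-1})_i ≤ 0 for all i ∈ [n]. -/
import Mathlib


/-- `(A x^{m-1})_i = ∑_{i_2,…,i_m} a_{i i_2 ⋯ i_m} x_{i_2} ⋯ x_{i_m}`,
for a real tensor of order `k+1` and dimension `n`, encoded as
`A : Fin n → (Fin k → Fin n) → ℝ`. -/
noncomputable def tApply {n k : ℕ} (A : Fin n → (Fin k → Fin n) → ℝ)
    (x : Fin n → ℝ) (i : Fin n) : ℝ :=
  ∑ f : Fin k → Fin n, A i f * ∏ j, x (f j)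

/-- There is no P tensor of odd order: if m is odd then there
is a nonzero x with x_i (A x^{m-1})_i ≤ 0 for all i. -/
theorem stmt_6 {m n : ℕ} (hm : Odd m) (hn : 0 < n)
    (A : Fin n → (Fin (m - 1) → Fin n) → ℝ) :
    ∃ x : Fin n → ℝ, x ≠ 0 ∧ ∀ i, x i * tApply A x i ≤ 0 := by
  set i0 : Fin n := ⟨0, hn⟩ with hi0
  set a : ℝ := A i0 (fun _ => i0) with ha
  set t : ℝ := if a ≤ 0 then 1 else -1 with ht
  have ht0 : t ≠ 0 := by
    rw [ht]; split <;> norm_num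
  have htm : t ^ m = t := by
    rw [ht]; split
    · simp
    · exact hm.neg_one_pow
  refine ⟨Pi.single i0 t, ?_, ?_⟩
  · intro h
    have := congrFun h i0
    rw [Pi.single_eq_same] at this
    exact ht0 this
  · intro i
    by_cases hi : i = i0
    · subst hi
      have hx : tApply A (Pi.single i0 t) i0 = a * t ^ (m - 1) := by
        rw [tApply]
        rw [Finset.sum_eq_single (fun _ : Fin (m - 1) => i0)]
        · simp only [Finset.prod_const, Finset.card_univ, Fintype.card_fin,
            Pi.single_eq_same, ha]
        · intro f _ hf
          have : ∃ j, f j ≠ i0 := by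
            by_contra h
            push_neg at h
            exact hf (funext h)
          obtain ⟨j, hj⟩ := this
          have hz : (Pi.single i0 t : Fin n → ℝ) (f j) = 0 := by
            rw [Pi.single_eq_of_ne hj]
          rw [Finset.prod_eq_zero (Finset.mem_univ j) hz, mul_zero]
        · intro h
          exact absurd (Finset.mem_univ _) h
      rw [hx, Pi.single_eq_same]
      have hm1 : m - 1 + 1 = m := Nat.succ_pred_eq_of_pos hm.pos
      have hmm : t * (a * t ^ (m - 1)) = a * t ^ m := by
        conv_rhs => rw [← hm1]
        rw [pow_succ]
        ring
      rw [hmm, htm, ht]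
      split
      · simpa using ‹a ≤ 0›
      · nlinarith [lt_of_not_ge ‹¬ a ≤ 0›]
    · rw [Pi.single_eq_of_ne hi, zero_mul]
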